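/- Let X be a Hausdorff topological space, Φ a global semiflow on X, and 𝒜 a closed attractor of Φ with region of attraction Ω(𝒜). Assume there exists a continuous function ψ : Ω(𝒜) → [0,∞) such that ψ(x) = 0 if and only if x ∈ 𝒜. Then there exists a continuous function ζ : Ω(𝒜) → [0,∞) such that: ζ(x) = 0 if and only if x ∈ 𝒜; for every x ∈ Ω(𝒜)∖𝒜 and every t > 0 one has Φ(t,x) ∈ Ω(𝒜) and ζ(Φ(t,x)) < ζ(x); and moreover, if for every a ≥ 0 the set {x ∈ Ω(𝒜) : ψ(x) ≤ a} is closed in X, then for every a ≥ 0 the set {x ∈ Ω(𝒜) : ζ(x) ≤ a} is closed in X. -/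

import Mathlib

open scoped NNReal
open Filter Topology Set

/-- `A` attracts `B` under the semiflow `Φ`: for every open `V ⊇ A` there is `T` such that
`Φ(t, b) ∈ V` for all `t > T` and `b ∈ B`. -/
def Attracts {X : Type*} [TopologicalSpace X] (Φ : ℝ≥0 × X → X) (A B : Set X) : Prop :=
  ∀ V : Set X, IsOpen V → A ⊆ V → ∃ T : ℝ≥0, ∀ t : ℝ≥0, T < t → ∀ b ∈ B, Φ (t, b) ∈ V

/-- `A` is invariant under the semiflow `Φ`: `Φ(t, ·)` maps `A` onto `A` for every `t ≥ 0`. -/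
def IsInvariantSet {X : Type*} (Φ : ℝ≥0 × X → X) (A : Set X) : Prop :=
  ∀ t : ℝ≥0, (fun x => Φ (t, x)) '' A = A

/-- `A` is an attractor of the semiflow `Φ`: a nonempty, sequentially compact, invariant set
attracting a neighbourhood `U` of its closure, and maximal among sequentially compact
invariant subsets of `U`. -/
def IsAttractor {X : Type*} [TopologicalSpace X] (Φ : ℝ≥0 × X → X) (A : Set X) : Prop :=
  A.Nonempty ∧ IsSeqCompact A ∧ IsInvariantSet Φ A ∧
    ∃ U : Set X, closure A ⊆ interior U ∧ Attracts Φ A U ∧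
      ∀ S : Set X, S ⊆ U → IsSeqCompact S → IsInvariantSet Φ S → S ⊆ A

/-- The region of attraction `Ω(A)` of `A`: all points attracted by `A`. -/
def attractionRegion {X : Type*} [TopologicalSpace X] (Φ : ℝ≥0 × X → X) (A : Set X) :
    Set X :=
  {x | Attracts Φ A {x}}

/-- a closed attractor `A` possessing a `𝒦₀` function `ψ` on its region of
attraction has a Lyapunov function `ζ` there, which is moreover `𝒦₀^∞` whenever `ψ` is. -/
theorem attractor_exists_lyapunov {X : Type*} [TopologicalSpace X] [T2Space X]
    (Φ : ℝ≥0 × X → X) (hcont : Continuous Φ)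
    (h0 : ∀ x : X, Φ (0, x) = x)
    (hadd : ∀ (t s : ℝ≥0) (x : X), Φ (t + s, x) = Φ (t, Φ (s, x)))
    (A : Set X) (hA : IsAttractor Φ A) (hAc : IsClosed A)
    (ψ : X → ℝ)
    (hψc : ContinuousOn ψ (attractionRegion Φ A))
    (hψ0 : ∀ x ∈ attractionRegion Φ A, 0 ≤ ψ x)
    (hψz : ∀ x ∈ attractionRegion Φ A, (ψ x = 0 ↔ x ∈ A)) :
    ∃ ζ : X → ℝ,
      ContinuousOn ζ (attractionRegion Φ A) ∧
      (∀ x ∈ attractionRegion Φ A, 0 ≤ ζ x) ∧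
      (∀ x ∈ attractionRegion Φ A, (ζ x = 0 ↔ x ∈ A)) ∧
      (∀ x ∈ attractionRegion Φ A \ A, ∀ t : ℝ≥0, 0 < t →
        Φ (t, x) ∈ attractionRegion Φ A ∧ ζ (Φ (t, x)) < ζ x) ∧
      ((∀ a : ℝ, 0 ≤ a → IsClosed {x | x ∈ attractionRegion Φ A ∧ ψ x ≤ a}) →
        ∀ a : ℝ, 0 ≤ a → IsClosed {x | x ∈ attractionRegion Φ A ∧ ζ x ≤ a}) := by
  classical
  set Ω : Set X := attractionRegion Φ A with hΩdef
  obtain ⟨hAne, hAseq, hAinv, U, hclosU, hattrU, hmax⟩ := hA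
  -- forward invariance of A
  have hAfwd : ∀ (t : ℝ≥0) {x : X}, x ∈ A → Φ (t, x) ∈ A := by
    intro t x hx
    have h := hAinv t
    have : Φ (t, x) ∈ (fun x => Φ (t, x)) '' A := ⟨x, hx, rfl⟩
    rwa [h] at this
  -- A ⊆ Ω
  have hAΩ : A ⊆ Ω := by
    intro x hx V hV hAV
    exact ⟨0, fun t _ b hb => by
      rcases hb with rfl
      exact hAV (hAfwd t hx)⟩
  -- U ⊆ Ω
  have hUΩ : U ⊆ Ω := by
    intro u hu V hV hAV
    obtain ⟨T, hT⟩ := hattrU V hV hAV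
    exact ⟨T, fun t ht b hb => by rcases hb with rfl; exact hT t ht b hu⟩
  -- forward invariance of Ω
  have hΩfwd : ∀ (s : ℝ≥0) {x : X}, x ∈ Ω → Φ (s, x) ∈ Ω := by
    intro s x hx V hV hAV
    obtain ⟨T, hT⟩ := hx V hV hAV
    refine ⟨T, fun t ht b hb => ?_⟩
    rcases hb with rfl
    rw [← hadd]
    exact hT (t + s) (lt_of_lt_of_le ht le_self_add) x (Set.mem_singleton _)
  -- backward "invariance" of Ω
  have hΩbwd : ∀ (s : ℝ≥0) {x : X}, Φ (s, x) ∈ Ω → x ∈ Ω := by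
    intro s x hx V hV hAV
    obtain ⟨T, hT⟩ := hx V hV hAV
    refine ⟨T + s, fun t ht b hb => ?_⟩
    have hbx : b = x := hb
    rw [hbx]
    have h1 : s ≤ t := le_trans le_add_self ht.le
    have h2 : Φ (t, x) = Φ (t - s, Φ (s, x)) := by
      rw [← hadd, tsub_add_cancel_of_le h1]
    rw [h2]
    exact hT (t - s) (lt_tsub_iff_right.2 ht) _ (Set.mem_singleton _)
  have hAIU : A ⊆ interior U := subset_closure.trans hclosU
  -- Ω is open
  have hΩopen : IsOpen Ω := by
    rw [isOpen_iff_forall_mem_open]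
    intro x hx
    obtain ⟨T, hT⟩ := hx (interior U) isOpen_interior hAIU
    refine ⟨(fun y => Φ (T + 1, y)) ⁻¹' interior U, ?_, ?_, ?_⟩
    · intro y hy
      exact hΩbwd (T + 1) (hUΩ (interior_subset hy))
    · exact isOpen_interior.preimage (hcont.comp (continuous_const.prodMk continuous_id))
    · exact hT (T + 1) (lt_add_of_pos_right T one_pos) x (Set.mem_singleton _)
  -- open sublevel sets of ψ
  have hOopen : ∀ ε : ℝ, IsOpen {y | y ∈ Ω ∧ ψ y < ε} := by
    intro ε
    have h := hψc.isOpen_inter_preimage hΩopen (isOpen_Iio (a := ε))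
    convert h using 1
    rfl
  have hOsub : ∀ ε : ℝ, 0 < ε → A ⊆ {y | y ∈ Ω ∧ ψ y < ε} := by
    intro ε hε a ha
    refine ⟨hAΩ ha, ?_⟩
    rw [(hψz a (hAΩ ha)).2 ha]
    exact hε
  -- convergence of ψ along orbits
  have hψtend : ∀ {x : X}, x ∈ Ω → ∀ ε : ℝ, 0 < ε → ∃ T : ℝ≥0, ∀ t, T < t →
      ψ (Φ (t, x)) < ε := by
    intro x hx ε hε
    obtain ⟨T, hT⟩ := hx _ (hOopen ε) (hOsub ε hε)
    exact ⟨T, fun t ht => (hT t ht x (Set.mem_singleton _)).2⟩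
  -- the gain function σ
  set σ : ℝ≥0 → ℝ := fun t => 1 + (t : ℝ) / (1 + (t : ℝ)) with hσdef
  have hσ1 : ∀ t, 1 ≤ σ t := by
    intro t
    have : (0 : ℝ) ≤ (t : ℝ) / (1 + (t : ℝ)) := div_nonneg t.2 (by positivity)
    simp only [hσdef]; linarith
  have hσ2 : ∀ t, σ t ≤ 2 := by
    intro t
    have h1 : (t : ℝ) / (1 + (t : ℝ)) ≤ 1 := by
      rw [div_le_one (by positivity)]; linarith [t.2]
    simp only [hσdef]; linarith
  have hσnn : ∀ t, 0 ≤ σ t := fun t => le_trans zero_le_one (hσ1 t)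
  have hσmono : ∀ {t t' : ℝ≥0}, t < t' → σ t < σ t' := by
    intro t t' h
    have hc : (t : ℝ) < (t' : ℝ) := h
    have h1 : (0:ℝ) < 1 + (t:ℝ) := by positivity
    have h2 : (0:ℝ) < 1 + (t':ℝ) := by positivity
    have : (t : ℝ) / (1 + (t : ℝ)) < (t' : ℝ) / (1 + (t' : ℝ)) := by
      rw [div_lt_div_iff₀ h1 h2]
      nlinarith [t.2, t'.2]
    simp only [hσdef]; linarith
  have hσcont : Continuous σ := by
    refine continuous_const.add (Continuous.div ?_ ?_ ?_)
    · exact NNReal.continuous_coe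
    · exact continuous_const.add NNReal.continuous_coe
    · intro t; positivity
  have hσ0 : σ 0 = 1 := by simp [hσdef]
  -- the candidate Lyapunov function
  set ζ : X → ℝ := fun x => ⨆ t : ℝ≥0, ψ (Φ (t, x)) * σ t with hζdef
  -- continuity of t ↦ ψ(Φ(t+s,x)) σ t for x ∈ Ω
  have horb : ∀ {x : X}, x ∈ Ω → ∀ s : ℝ≥0,
      Continuous fun t : ℝ≥0 => ψ (Φ (t + s, x)) * σ t := by
    intro x hx s
    have h1 : Continuous fun t : ℝ≥0 => Φ (t + s, x) :=
      hcont.comp ((continuous_id.add continuous_const).prodMk continuous_const)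
    have h2 : Continuous fun t : ℝ≥0 => ψ (Φ (t + s, x)) :=
      hψc.comp_continuous h1 (fun t => hΩfwd (t + s) hx)
    exact h2.mul hσcont
  have horb0 : ∀ {x : X}, x ∈ Ω → Continuous fun t : ℝ≥0 => ψ (Φ (t, x)) * σ t := by
    intro x hx
    have := horb hx 0
    simpa using this
  -- boundedness of the sup
  have hbdd : ∀ x ∈ Ω, BddAbove (Set.range fun t : ℝ≥0 => ψ (Φ (t, x)) * σ t) := by
    intro x hx
    obtain ⟨T, hT⟩ := hψtend hx 1 one_pos
    obtain ⟨C, hC⟩ := ((isCompact_Icc (a := (0:ℝ≥0)) (b := T)).image (horb0 hx)).bddAbove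
    refine ⟨max C 2, ?_⟩
    rintro r ⟨t, rfl⟩
    by_cases h : t ≤ T
    · exact le_max_of_le_left (hC ⟨t, ⟨zero_le, h⟩, rfl⟩)
    · push_neg at h
      have h1 : ψ (Φ (t, x)) < 1 := hT t h
      have h2 : 0 ≤ ψ (Φ (t, x)) := hψ0 _ (hΩfwd t hx)
      refine le_max_of_le_right ?_
      calc ψ (Φ (t, x)) * σ t ≤ 1 * 2 :=
            mul_le_mul h1.le (hσ2 t) (hσnn t) zero_le_one
        _ = 2 := by ring
  -- ζ dominates ψ
  have hζge : ∀ x ∈ Ω, ψ x ≤ ζ x := by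
    intro x hx
    have := le_ciSup (hbdd x hx) 0
    simpa [h0 x, hσ0] using this
  have hζnn : ∀ x ∈ Ω, 0 ≤ ζ x := fun x hx => le_trans (hψ0 x hx) (hζge x hx)
  -- ζ vanishes exactly on A
  have hζzero : ∀ x ∈ Ω, (ζ x = 0 ↔ x ∈ A) := by
    intro x hx
    constructor
    · intro h
      have h1 : ψ x ≤ 0 := h ▸ hζge x hx
      exact (hψz x hx).1 (le_antisymm h1 (hψ0 x hx))
    · intro h
      have h1 : (fun t : ℝ≥0 => ψ (Φ (t, x)) * σ t) = fun _ => (0:ℝ) := by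
        funext t
        rw [(hψz _ (hAΩ (hAfwd t h))).2 (hAfwd t h), zero_mul]
      show (⨆ t : ℝ≥0, ψ (Φ (t, x)) * σ t) = 0
      rw [h1]
      exact ciSup_const
  -- strict decrease along the flow
  have hdec : ∀ x ∈ Ω \ A, ∀ s : ℝ≥0, 0 < s →
      Φ (s, x) ∈ Ω ∧ ζ (Φ (s, x)) < ζ x := by
    rintro x ⟨hxΩ, hxA⟩ s hs
    have hsx : Φ (s, x) ∈ Ω := hΩfwd s hxΩ
    refine ⟨hsx, ?_⟩
    have hψxpos : 0 < ψ x :=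
      lt_of_le_of_ne (hψ0 x hxΩ) (fun h => hxA ((hψz x hxΩ).1 h.symm))
    have hζxpos : 0 < ζ x := lt_of_lt_of_le hψxpos (hζge x hxΩ)
    by_cases hsa : Φ (s, x) ∈ A
    · rw [(hζzero _ hsx).2 hsa]; exact hζxpos
    · set M := ζ (Φ (s, x)) with hM
      have hMpos : 0 < M :=
        lt_of_le_of_ne (hζnn _ hsx) (fun h => hsa ((hζzero _ hsx).1 h.symm))
      obtain ⟨T, hT⟩ := hψtend hxΩ (M / 4) (by positivity)
      obtain ⟨t₀, ht₀K, ht₀max⟩ :=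
        (isCompact_Icc (a := (0:ℝ≥0)) (b := T)).exists_isMaxOn
          ⟨0, Set.left_mem_Icc.2 (zero_le)⟩ (horb hxΩ s).continuousOn
      have hsup : ∀ t : ℝ≥0,
          ψ (Φ (t + s, x)) * σ t ≤ max (ψ (Φ (t₀ + s, x)) * σ t₀) (M / 2) := by
        intro t
        by_cases h : t ≤ T
        · exact le_max_of_le_left (ht₀max ⟨zero_le, h⟩)
        · push_neg at h
          have h1 : ψ (Φ (t + s, x)) < M / 4 := hT (t + s) (lt_of_lt_of_le h le_self_add)
          have h2 : 0 ≤ ψ (Φ (t + s, x)) := hψ0 _ (hΩfwd _ hxΩ)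
          refine le_max_of_le_right ?_
          calc ψ (Φ (t + s, x)) * σ t ≤ (M / 4) * 2 :=
                mul_le_mul h1.le (hσ2 t) (hσnn t) (by positivity)
            _ = M / 2 := by ring
      have hζeq : ζ (Φ (s, x)) = ⨆ t : ℝ≥0, ψ (Φ (t + s, x)) * σ t := by
        show (⨆ t : ℝ≥0, ψ (Φ (t, Φ (s, x))) * σ t) = _
        congr 1
        funext t
        rw [← hadd]
      have hMle : M ≤ max (ψ (Φ (t₀ + s, x)) * σ t₀) (M / 2) := by
        conv_lhs => rw [hM, hζeq]
        exact ciSup_le hsup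
      have hhead : M ≤ ψ (Φ (t₀ + s, x)) * σ t₀ := by
        rcases le_max_iff.1 hMle with h | h
        · exact h
        · linarith
      have hψt₀pos : 0 < ψ (Φ (t₀ + s, x)) := by
        by_contra h
        push_neg at h
        nlinarith [hσ1 t₀, hσ2 t₀]
      calc M ≤ ψ (Φ (t₀ + s, x)) * σ t₀ := hhead
        _ < ψ (Φ (t₀ + s, x)) * σ (t₀ + s) :=
            mul_lt_mul_of_pos_left (hσmono (lt_add_of_pos_right t₀ hs)) hψt₀pos
        _ ≤ ζ x := le_ciSup (hbdd x hxΩ) (t₀ + s)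
  -- continuity of ζ at points of Ω
  have hζcontAt : ∀ x₀ ∈ Ω, ContinuousAt ζ x₀ := by
    intro x₀ h₀
    rw [ContinuousAt, tendsto_order]
    constructor
    · -- lower semicontinuity
      intro b hb
      have hb' : b < ⨆ t : ℝ≥0, ψ (Φ (t, x₀)) * σ t := hb
      obtain ⟨t₀, ht₀⟩ := exists_lt_of_lt_ciSup hb'
      have hcty : ContinuousAt (fun y => ψ (Φ (t₀, y)) * σ t₀) x₀ := by
        have h1 : ContinuousAt (fun y => Φ (t₀, y)) x₀ :=
          (hcont.comp (continuous_const.prodMk continuous_id)).continuousAt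
        have h2 : ContinuousAt ψ (Φ (t₀, x₀)) :=
          hψc.continuousAt (hΩopen.mem_nhds (hΩfwd t₀ h₀))
        have h3 : ContinuousAt (fun y => ψ (Φ (t₀, y))) x₀ :=
          ContinuousAt.comp (f := fun y => Φ (t₀, y)) h2 h1
        exact h3.mul continuousAt_const
      have hev : ∀ᶠ y in 𝓝 x₀, b < ψ (Φ (t₀, y)) * σ t₀ :=
        hcty.eventually (isOpen_Ioi.eventually_mem ht₀)
      filter_upwards [hev, hΩopen.eventually_mem h₀] with y h1 h2
      exact lt_of_lt_of_le h1 (le_ciSup (hbdd y h2) t₀)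
    · -- upper semicontinuity
      intro b hb
      set ε : ℝ := (b - ζ x₀) / 2 with hε
      have hεpos : 0 < ε := by simp only [hε]; linarith
      obtain ⟨T₀, hT₀⟩ := h₀ (interior U) isOpen_interior hAIU
      obtain ⟨T₂, hT₂⟩ := hattrU {y | y ∈ Ω ∧ ψ y < ε / 2} (hOopen _)
        (hOsub _ (by positivity))
      set t₁ : ℝ≥0 := T₀ + 1 with ht₁
      have hx₀U : Φ (t₁, x₀) ∈ interior U :=
        hT₀ t₁ (lt_add_of_pos_right _ one_pos) x₀ (Set.mem_singleton _)
      have hW₁ : ∀ᶠ y in 𝓝 x₀, Φ (t₁, y) ∈ interior U :=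
        ((hcont.comp (continuous_const.prodMk continuous_id)).continuousAt).eventually
          (isOpen_interior.eventually_mem hx₀U)
      have hhead : ∀ᶠ y in 𝓝 x₀, ∀ t ∈ Set.Icc (0:ℝ≥0) (t₁ + T₂ + 1),
          ψ (Φ (t, y)) * σ t < ζ x₀ + ε := by
        apply (isCompact_Icc (a := (0:ℝ≥0)) (b := t₁ + T₂ + 1)).eventually_forall_of_forall_eventually
        intro t _
        have hGat : ContinuousAt (fun p : X × ℝ≥0 => ψ (Φ (p.2, p.1)) * σ p.2) (x₀, t) := by
          have h1 : ContinuousAt (fun p : X × ℝ≥0 => Φ (p.2, p.1)) (x₀, t) :=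
            (hcont.comp (continuous_snd.prodMk continuous_fst)).continuousAt
          have h2 : ContinuousAt ψ (Φ (t, x₀)) :=
            hψc.continuousAt (hΩopen.mem_nhds (hΩfwd t h₀))
          have h3 : ContinuousAt (fun p : X × ℝ≥0 => ψ (Φ (p.2, p.1))) (x₀, t) :=
            ContinuousAt.comp (f := fun p : X × ℝ≥0 => Φ (p.2, p.1)) h2 h1
          exact h3.mul ((hσcont.comp continuous_snd).continuousAt)
        have hval : ψ (Φ (t, x₀)) * σ t ≤ ζ x₀ := le_ciSup (hbdd x₀ h₀) t
        exact hGat.eventually (isOpen_Iio.eventually_mem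
          (lt_of_le_of_lt hval (lt_add_of_pos_right _ hεpos)))
      filter_upwards [hW₁, hhead, hΩopen.eventually_mem h₀] with y hy1 hy2 hyΩ
      have hle : ζ y ≤ ζ x₀ + ε := by
        show (⨆ t : ℝ≥0, ψ (Φ (t, y)) * σ t) ≤ ζ x₀ + ε
        refine ciSup_le fun t => ?_
        by_cases h : t ≤ t₁ + T₂ + 1
        · exact (hy2 t ⟨zero_le, h⟩).le
        · push_neg at h
          have hts : t₁ ≤ t := le_trans (by
            calc t₁ ≤ t₁ + T₂ := le_self_add
              _ ≤ t₁ + T₂ + 1 := le_self_add) h.le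
          have hrw2 : Φ (t, y) = Φ (t - t₁, Φ (t₁, y)) := by
            rw [← hadd, tsub_add_cancel_of_le hts]
          have h2 : T₂ < t - t₁ := by
            rw [lt_tsub_iff_right]
            calc T₂ + t₁ = t₁ + T₂ := add_comm _ _
              _ ≤ t₁ + T₂ + 1 := le_self_add
              _ < t := h
          have h3 := hT₂ (t - t₁) h2 _ (interior_subset hy1)
          have hψlt : ψ (Φ (t, y)) < ε / 2 := by rw [hrw2]; exact h3.2
          have h4 : 0 ≤ ψ (Φ (t, y)) := hψ0 _ (hΩfwd t hyΩ)
          have h5 : ψ (Φ (t, y)) * σ t ≤ ψ (Φ (t, y)) * 2 :=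
            mul_le_mul_of_nonneg_left (hσ2 t) h4
          nlinarith [hζnn x₀ h₀]
      simp only [hε] at hle ⊢
      linarith
  refine ⟨ζ, fun x hx => (hζcontAt x hx).continuousWithinAt, hζnn, hζzero, hdec, ?_⟩
  -- properness transfer
  intro H a ha
  have hsub : {x | x ∈ Ω ∧ ζ x ≤ a} ⊆ {x | x ∈ Ω ∧ ψ x ≤ a} :=
    fun x hx => ⟨hx.1, le_trans (hζge x hx.1) hx.2⟩
  rw [← closure_subset_iff_isClosed]
  intro x hx
  have hxC : x ∈ {x | x ∈ Ω ∧ ψ x ≤ a} :=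
    (closure_subset_iff_isClosed.2 (H a ha)) ((closure_mono hsub) hx)
  have hxΩ : x ∈ Ω := hxC.1
  refine ⟨hxΩ, ?_⟩
  have hct : ContinuousWithinAt ζ {x | x ∈ Ω ∧ ζ x ≤ a} x :=
    (hζcontAt x hxΩ).continuousWithinAt
  have hne : (𝓝[{x | x ∈ Ω ∧ ζ x ≤ a}] x).NeBot := mem_closure_iff_nhdsWithin_neBot.1 hx
  exact le_of_tendsto hct (eventually_nhdsWithin_of_forall fun y hy => hy.2)
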